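/- Let e be a Hermite–Biehler function such that s_{π/2} ∉ ℬ(e), let n ∈ ℬ(e) and w ∈ ℂ. If the entire function z ↦ s_{π/2}(w)·n(z) − s_{π/2}(z)·n(w) belongs to ℬ(e), then n(w) = 0. -/

import Mathlib

open Complex MeasureTheory Filter Topology
open scoped ENNReal Classical

noncomputable section

/-- `f^#(z) = conj (f (conj z))`. -/
def sharp (f : ℂ → ℂ) : ℂ → ℂ := fun z => (starRingEnd ℂ) (f ((starRingEnd ℂ) z))

/-- Hermite–Biehler function: entire, no real zeros, `|e(conj z)| < |e z)|` on the upper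
half-plane. -/
def HermiteBiehler (e : ℂ → ℂ) : Prop :=
  Differentiable ℂ e ∧ (∀ x : ℝ, e x ≠ 0) ∧
    ∀ z : ℂ, 0 < z.im → ‖e ((starRingEnd ℂ) z)‖ < ‖e z‖

/-- Hardy space `H²` of the upper half-plane. -/
def HardyH2 (f : ℂ → ℂ) : Prop :=
  DifferentiableOn ℂ f {z : ℂ | 0 < z.im} ∧
    ∃ C : ℝ≥0∞, C ≠ ⊤ ∧ ∀ y : ℝ, 0 < y →
      eLpNorm (fun x : ℝ => f (x + y * Complex.I)) 2 volume ≤ C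

/-- Membership in the de Branges space `ℬ(e)`. -/
def MemDB (e f : ℂ → ℂ) : Prop :=
  Differentiable ℂ f ∧ HardyH2 (fun z => f z / e z) ∧ HardyH2 (fun z => sharp f z / e z)

/-- The associated functions `s_β`. -/
def sFun (e : ℂ → ℂ) (β : ℝ) : ℂ → ℂ := fun z =>
  (Complex.I / 2) * (Complex.exp (Complex.I * β) * e z -
    Complex.exp (-(Complex.I * β)) * sharp e z)

/-- Integrand of the de Branges inner product `⟨g, f⟩`. -/
def dbItg (e g f : ℂ → ℂ) (x : ℝ) : ℂ :=
  (starRingEnd ℂ) (g x) * f x / ((‖e x‖ : ℝ) : ℂ) ^ 2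

/-- The domain of the canonical selfadjoint extension `S_β`, `β ∈ (0,π)`. -/
def domS (e : ℂ → ℂ) (β : ℝ) : Set (ℂ → ℂ) :=
  {g | Differentiable ℂ g ∧ ∃ f : ℂ → ℂ, MemDB e f ∧ ∃ w : ℂ, ∀ z : ℂ, z ≠ w →
    g z = (sFun e β w * f z - sFun e β z * f w) / (Real.sin β * (z - w))}

lemma line_continuous {f : ℂ → ℂ} (hf : DifferentiableOn ℂ f {z : ℂ | 0 < z.im})
    {y : ℝ} (hy : 0 < y) : Continuous (fun x : ℝ => f (x + y * Complex.I)) := by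
  have hopen : IsOpen {z : ℂ | 0 < z.im} := isOpen_lt continuous_const Complex.continuous_im
  have : ∀ x : ℝ, ContinuousAt (fun x : ℝ => f (x + y * Complex.I)) x := by
    intro x
    have hmem : ((x : ℂ) + y * Complex.I) ∈ {z : ℂ | 0 < z.im} := by simp [hy]
    have hd := (hf.differentiableAt (hopen.mem_nhds hmem)).continuousAt
    have hc : ContinuousAt (fun x : ℝ => (x : ℂ) + y * Complex.I) x :=
      (Complex.continuous_ofReal.add continuous_const).continuousAt
    exact ContinuousAt.comp hd hc
  exact continuous_iff_continuousAt.mpr this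

lemma HardyH2.linsum {f g : ℂ → ℂ} (c d : ℂ) (hf : HardyH2 f) (hg : HardyH2 g) :
    HardyH2 (fun z => c * f z + d * g z) := by
  obtain ⟨hfd, C, hC, hCb⟩ := hf
  obtain ⟨hgd, D, hD, hDb⟩ := hg
  refine ⟨((hfd.const_mul c).add (hgd.const_mul d) : _), ‖c‖₊ * C + ‖d‖₊ * D, ?_, ?_⟩
  · exact ENNReal.add_ne_top.mpr ⟨ENNReal.mul_ne_top ENNReal.coe_ne_top hC,
      ENNReal.mul_ne_top ENNReal.coe_ne_top hD⟩
  · intro y hy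
    have hmf : AEStronglyMeasurable (fun x : ℝ => c * f (x + y * Complex.I)) volume :=
      ((line_continuous hfd hy).const_smul c).aestronglyMeasurable
    have hmg : AEStronglyMeasurable (fun x : ℝ => d * g (x + y * Complex.I)) volume :=
      ((line_continuous hgd hy).const_smul d).aestronglyMeasurable
    calc eLpNorm (fun x : ℝ => c * f (x + y * Complex.I) + d * g (x + y * Complex.I)) 2 volume
        ≤ eLpNorm (fun x : ℝ => c * f (x + y * Complex.I)) 2 volume
          + eLpNorm (fun x : ℝ => d * g (x + y * Complex.I)) 2 volume :=
          eLpNorm_add_le hmf hmg (by norm_num)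
      _ ≤ ‖c‖₊ * C + ‖d‖₊ * D := by
          gcongr
          · simpa [Pi.smul_def] using
              (eLpNorm_const_smul c (fun x : ℝ => f (x + y * Complex.I)) (p := 2)
                (μ := volume)).le.trans (by gcongr; exacts [(enorm_eq_nnnorm c).le, hCb y hy])
          · simpa [Pi.smul_def] using
              (eLpNorm_const_smul d (fun x : ℝ => g (x + y * Complex.I)) (p := 2)
                (μ := volume)).le.trans (by gcongr; exacts [(enorm_eq_nnnorm d).le, hDb y hy])

lemma MemDB.linsum {e f g : ℂ → ℂ} (c d : ℂ) (hf : MemDB e f) (hg : MemDB e g) :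
    MemDB e (fun z => c * f z + d * g z) := by
  obtain ⟨hfd, hf1, hf2⟩ := hf
  obtain ⟨hgd, hg1, hg2⟩ := hg
  refine ⟨(hfd.const_mul c).add (hgd.const_mul d), ?_, ?_⟩
  · have : (fun z => (c * f z + d * g z) / e z)
        = fun z => c * (f z / e z) + d * (g z / e z) := by
      funext z; ring
    rw [this]; exact hf1.linsum c d hg1
  · have : (fun z => sharp (fun z => c * f z + d * g z) z / e z)
        = fun z => (starRingEnd ℂ) c * (sharp f z / e z)
            + (starRingEnd ℂ) d * (sharp g z / e z) := by
      funext z; simp only [sharp, map_add, map_mul]; ring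
    rw [this]; exact hf2.linsum _ _ hg2

/-- If `s_{π/2} ∉ ℬ(e)`, `n ∈ ℬ(e)`, `w ∈ ℂ` and
`z ↦ s_{π/2}(w) n(z) - s_{π/2}(z) n(w)` belongs to `ℬ(e)`, then `n(w) = 0`. -/
theorem vanishing_of_n (e : ℂ → ℂ) (he : HermiteBiehler e)
    (hs : ¬ MemDB e (sFun e (Real.pi / 2)))
    (n : ℂ → ℂ) (hn : MemDB e n) (w : ℂ)
    (hmem : MemDB e (fun z => sFun e (Real.pi / 2) w * n z - sFun e (Real.pi / 2) z * n w)) :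
    n w = 0 := by
  by_contra hnw
  apply hs
  have key : sFun e (Real.pi / 2)
      = fun z => (sFun e (Real.pi / 2) w / n w) * n z
        + (-(1 / n w)) * ((fun z => sFun e (Real.pi / 2) w * n z
            - sFun e (Real.pi / 2) z * n w) z) := by
    funext z
    field_simp
    ring
  rw [key]
  exact hn.linsum _ _ hmem
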